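/- arXiv:2302.00469 — 2 statements merged into one kernel-verified Lean document; each statement's English description precedes it below -/
import Mathlib

section
/- Under sampling without replacement with n1 out of n units treated (n ≥ 2), for any two distinct indices i ≠ j, E[(T_i − π)^2 (T_j − π)] = −π(1−π)(1−2π)/(n−1), where π = n1/n. -/
open Finset

/-- The set of assignment vectors with exactly `n1` treated units. -/
noncomputable def assignSet (n n1 : ℕ) : Finset (Fin n → Bool) :=
  Finset.univ.filter (fun t => (Finset.univ.filter (fun j => t j = true)).card = n1)

/-- Expectation of `f` under the uniform distribution on `assignSet n n1`. -/
noncomputable def cexp (n n1 : ℕ) (f : (Fin n → Bool) → ℝ) : ℝ :=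
  (∑ t ∈ assignSet n n1, f t) / (assignSet n n1).card

/-- Indicator of treatment for unit `i`. -/
noncomputable def Tv {n : ℕ} (t : Fin n → Bool) (i : Fin n) : ℝ := if t i then 1 else 0

lemma aux_count (n n1 : ℕ) (a : Finset (Fin n)) (ha : a.card ≤ n1) :
    ((assignSet n n1).filter (fun t => ∀ k ∈ a, t k = true)).card
      = (n - a.card).choose (n1 - a.card) := by
  have hcard : (univ \ a).card = n - a.card := by
    rw [card_sdiff_of_subset (subset_univ a), card_univ, Fintype.card_fin]
  rw [← hcard, ← Finset.card_powersetCard (n1 - a.card) (univ \ a)]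
  apply Finset.card_bij (fun t _ => univ.filter (fun k => t k = true) \ a)
  · intro t ht
    simp only [assignSet, mem_filter, mem_univ, true_and] at ht
    obtain ⟨hc, hall⟩ := ht
    have hsub : a ⊆ univ.filter (fun k => t k = true) := by
      intro k hk; simp [hall k hk]
    rw [mem_powersetCard]
    exact ⟨sdiff_subset_sdiff (subset_univ _) Subset.rfl,
      by rw [card_sdiff_of_subset hsub, hc]⟩
  · intro t1 h1 t2 h2 heq
    simp only [assignSet, mem_filter, mem_univ, true_and] at h1 h2
    have hs1 : a ⊆ univ.filter (fun k => t1 k = true) := by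
      intro k hk; simp [h1.2 k hk]
    have hs2 : a ⊆ univ.filter (fun k => t2 k = true) := by
      intro k hk; simp [h2.2 k hk]
    have : univ.filter (fun k => t1 k = true) = univ.filter (fun k => t2 k = true) := by
      rw [← sdiff_union_of_subset hs1, ← sdiff_union_of_subset hs2, heq]
    funext k
    have := Finset.ext_iff.mp this k
    simp only [mem_filter, mem_univ, true_and] at this
    cases hk1 : t1 k <;> cases hk2 : t2 k <;> simp_all
  · intro s hs
    rw [mem_powersetCard] at hs
    obtain ⟨hsub, hsc⟩ := hs
    have hdisj : Disjoint s a := by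
      intro u hus hua k hk
      exact absurd (hsub (hus hk)) (by simp [mem_sdiff, (hua hk)])
    refine ⟨fun k => decide (k ∈ s ∪ a), ?_, ?_⟩
    · have hfe : univ.filter (fun k => decide (k ∈ s ∪ a) = true) = s ∪ a := by
        ext k; simp
      simp only [assignSet, mem_filter, mem_univ, true_and]
      constructor
      · rw [hfe, card_union_of_disjoint hdisj, hsc]
        omega
      · intro k hk; simp [mem_union, hk]
    · have hfe : univ.filter (fun k => decide (k ∈ s ∪ a) = true) = s ∪ a := by
        ext k; simp
      rw [hfe, union_sdiff_right, sdiff_eq_self_of_disjoint hdisj]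

lemma nat1 (n n1 : ℕ) (h1 : 1 ≤ n1) (hle : n1 ≤ n) :
    n * (n - 1).choose (n1 - 1) = n1 * n.choose n1 := by
  obtain ⟨m, rfl⟩ : ∃ m, n = m + 1 := ⟨n - 1, by omega⟩
  obtain ⟨k, rfl⟩ : ∃ k, n1 = k + 1 := ⟨n1 - 1, by omega⟩
  simp only [Nat.add_sub_cancel]
  have h := Nat.add_one_mul_choose_eq m k
  try simp only [Nat.succ_eq_add_one] at h
  calc (m + 1) * m.choose k = (m + 1).choose (k + 1) * (k + 1) := h
    _ = (k + 1) * (m + 1).choose (k + 1) := Nat.mul_comm _ _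

lemma nat2 (n n1 : ℕ) (hn : 2 ≤ n) (h2 : 2 ≤ n1) :
    n * (n - 1) * (n - 2).choose (n1 - 2) = n1 * (n1 - 1) * n.choose n1 := by
  obtain ⟨m, rfl⟩ : ∃ m, n = m + 2 := ⟨n - 2, by omega⟩
  obtain ⟨k, rfl⟩ : ∃ k, n1 = k + 2 := ⟨n1 - 2, by omega⟩
  have e1 : (m + 1) * m.choose k = (m + 1).choose (k + 1) * (k + 1) :=
    Nat.add_one_mul_choose_eq m k
  have e2 : (m + 2) * (m + 1).choose (k + 1) = (m + 2).choose (k + 2) * (k + 2) :=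
    Nat.add_one_mul_choose_eq (m + 1) (k + 1)
  have e3 : m + 2 - 1 = m + 1 := by omega
  have e4 : k + 2 - 1 = k + 1 := by omega
  have e5 : m + 2 - 2 = m := by omega
  have e6 : k + 2 - 2 = k := by omega
  rw [e3, e4, e5, e6]
  calc (m + 2) * (m + 1) * m.choose k
      = (m + 2) * ((m + 1) * m.choose k) := by ring
    _ = (m + 2) * ((m + 1).choose (k + 1) * (k + 1)) := by rw [e1]
    _ = ((m + 2) * (m + 1).choose (k + 1)) * (k + 1) := by ring
    _ = ((m + 2).choose (k + 2) * (k + 2)) * (k + 1) := by rw [e2]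
    _ = (k + 2) * (k + 1) * (m + 2).choose (k + 2) := by ring

theorem stmt_5 (n n1 : ℕ) (hn : 2 ≤ n) (h1 : 1 ≤ n1) (hle : n1 ≤ n) (i j : Fin n)
    (hij : i ≠ j) :
    cexp n n1 (fun t => (Tv t i - (n1 : ℝ) / n) ^ 2 * (Tv t j - (n1 : ℝ) / n))
      = -(((n1 : ℝ) / n) * (1 - (n1 : ℝ) / n) * (1 - 2 * ((n1 : ℝ) / n))) / ((n : ℝ) - 1) := by
  set π : ℝ := (n1 : ℝ) / n with hπ
  -- Cardinalities
  have hC0 : (assignSet n n1).card = n.choose n1 := by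
    have := aux_count n n1 ∅ (by simp)
    simpa using this
  have hS1 : ∀ k : Fin n, ((assignSet n n1).filter (fun t => t k = true)).card
      = (n - 1).choose (n1 - 1) := by
    intro k
    have := aux_count n n1 {k} (by simpa using h1)
    simpa using this
  have hS11 : (((assignSet n n1).filter (fun t => t i = true ∧ t j = true)).card : ℝ)
      * ((n : ℝ) * ((n : ℝ) - 1)) = (n1 : ℝ) * ((n1 : ℝ) - 1) * (n.choose n1 : ℝ) := by
    rcases eq_or_lt_of_le h1 with h | h2
    · -- n1 = 1 : no vector has two treated units
      have hempty : ((assignSet n n1).filter (fun t => t i = true ∧ t j = true)) = ∅ := by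
        rw [filter_eq_empty_iff]
        intro t ht
        simp only [assignSet, mem_filter, mem_univ, true_and] at ht
        rintro ⟨hti, htj⟩
        have hsub : ({i, j} : Finset (Fin n)) ⊆ univ.filter (fun k => t k = true) := by
          intro k hk
          simp only [mem_insert, mem_singleton] at hk
          rcases hk with rfl | rfl <;> simp [hti, htj]
        have := Finset.card_le_card hsub
        rw [card_insert_of_notMem (by simpa using hij), card_singleton, ht] at this
        omega
      rw [hempty, ← h]
      norm_num
    · have heq : ((assignSet n n1).filter (fun t => t i = true ∧ t j = true)).card
          = (n - 2).choose (n1 - 2) := by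
        have := aux_count n n1 {i, j} (by
          rw [card_insert_of_notMem (by simpa using hij), card_singleton]; omega)
        rw [card_insert_of_notMem (by simpa using hij), card_singleton] at this
        rw [← this]
        congr 1
        apply filter_congr
        intro t _
        constructor
        · rintro ⟨hti, htj⟩ k hk
          simp only [mem_insert, mem_singleton] at hk
          rcases hk with rfl | rfl
          · exact hti
          · exact htj
        · intro h
          exact ⟨h i (by simp), h j (by simp)⟩
      rw [heq]
      have ha' : 1 ≤ n := h1.trans hle
      have hb' : 1 ≤ n1 := h1
      have ea : ((n - 1 : ℕ) : ℝ) = (n : ℝ) - 1 := by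
        push_cast [Nat.cast_sub ha']; ring
      have eb : ((n1 - 1 : ℕ) : ℝ) = (n1 : ℝ) - 1 := by
        push_cast [Nat.cast_sub hb']; ring
      have hc := congrArg (Nat.cast : ℕ → ℝ) (nat2 n n1 hn h2)
      push_cast [ea, eb] at hc
      linarith [hc]
  have hS1r : (((n - 1).choose (n1 - 1) : ℕ) : ℝ) * (n : ℝ)
      = (n1 : ℝ) * (n.choose n1 : ℝ) := by
    have := nat1 n n1 h1 hle
    have hc := congrArg (fun x : ℕ => (x : ℝ)) this
    push_cast at hc
    linarith [hc]
  -- pointwise identity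
  have hpt : ∀ t : Fin n → Bool,
      (Tv t i - π) ^ 2 * (Tv t j - π)
        = (1 - 2 * π) * (if t i = true ∧ t j = true then (1:ℝ) else 0)
          - π * (1 - 2 * π) * (if t i = true then (1:ℝ) else 0)
          + π ^ 2 * (if t j = true then (1:ℝ) else 0) - π ^ 3 := by
    intro t
    simp only [Tv]
    cases hti : t i <;> cases htj : t j <;> simp <;> ring
  -- sum computation
  have hsum : (∑ t ∈ assignSet n n1, (Tv t i - π) ^ 2 * (Tv t j - π))
      = (1 - 2 * π) * (((assignSet n n1).filter (fun t => t i = true ∧ t j = true)).card : ℝ)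
        - π * (1 - 2 * π) * (((assignSet n n1).filter (fun t => t i = true)).card : ℝ)
        + π ^ 2 * (((assignSet n n1).filter (fun t => t j = true)).card : ℝ)
        - π ^ 3 * ((assignSet n n1).card : ℝ) := by
    rw [Finset.sum_congr rfl (fun t _ => hpt t)]
    rw [Finset.sum_sub_distrib, Finset.sum_add_distrib, Finset.sum_sub_distrib,
      ← Finset.mul_sum, ← Finset.mul_sum, ← Finset.mul_sum, Finset.sum_const,
      Finset.sum_boole, Finset.sum_boole, Finset.sum_boole]
    ring
  -- final algebra
  have hn0 : (n : ℝ) ≠ 0 := by positivity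
  have hn1ne : (n : ℝ) - 1 ≠ 0 := by
    have : (2 : ℝ) ≤ (n : ℝ) := by exact_mod_cast hn
    linarith
  have hC0pos : 0 < (n.choose n1 : ℝ) := by
    exact_mod_cast Nat.choose_pos hle
  have hC0ne : (n.choose n1 : ℝ) ≠ 0 := ne_of_gt hC0pos
  rw [cexp, hsum, hS1 i, hS1 j, hC0]
  set C0 : ℝ := (n.choose n1 : ℝ)
  set S1 : ℝ := (((n - 1).choose (n1 - 1) : ℕ) : ℝ)
  set S11 : ℝ := (((assignSet n n1).filter (fun t => t i = true ∧ t j = true)).card : ℝ)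
  have hS1v : S1 = (n1 : ℝ) / n * C0 := by
    field_simp
    linarith [hS1r]
  have hS11v : S11 = (n1 : ℝ) * ((n1 : ℝ) - 1) / ((n : ℝ) * ((n : ℝ) - 1)) * C0 := by
    rw [div_mul_eq_mul_div, eq_div_iff (mul_ne_zero hn0 hn1ne)]
    linarith [hS11]
  rw [hS1v, hS11v, hπ]
  field_simp
  ring
end

section
/- Under sampling without replacement with n1 out of n units treated (n ≥ 3), for any three mutually distinct indices i, j, k, E[(T_i − π)(T_j − π)(T_k − π)] = 2π(1−π)(1−2π)/((n−1)(n−2)), where π = n1/n. -/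
open Finset

lemma count_filter (n n1 : ℕ) (S : Finset (Fin n)) (hS : S.card ≤ n1) :
    ((assignSet n n1).filter (fun t => ∀ x ∈ S, t x = true)).card
      = (n - S.card).choose (n1 - S.card) := by
  have hsub : S ⊆ univ := subset_univ S
  have key : ((assignSet n n1).filter (fun t => ∀ x ∈ S, t x = true)).card
      = ((univ \ S).powersetCard (n1 - S.card)).card := by
    apply Finset.card_bij (fun t _ => (univ.filter (fun j => t j = true)) \ S)
    · intro t ht
      simp only [assignSet, mem_filter, mem_univ, true_and] at ht
      obtain ⟨⟨hcard, hall⟩⟩ := And.intro ht trivial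
      have hSsub : S ⊆ univ.filter (fun j => t j = true) := by
        intro x hx; simp [hall x hx]
      rw [Finset.mem_powersetCard]
      constructor
      · exact Finset.sdiff_subset_sdiff (subset_univ _) (le_refl S)
      · rw [Finset.card_sdiff_of_subset hSsub, hcard]
    · intro t ht t' ht' heq
      simp only [assignSet, mem_filter, mem_univ, true_and] at ht ht'
      have hSsub : S ⊆ univ.filter (fun j => t j = true) := by
        intro x hx; simp [ht.2 x hx]
      have hSsub' : S ⊆ univ.filter (fun j => t' j = true) := by
        intro x hx; simp [ht'.2 x hx]
      have : univ.filter (fun j => t j = true) = univ.filter (fun j => t' j = true) := by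
        rw [← Finset.sdiff_union_of_subset hSsub, ← Finset.sdiff_union_of_subset hSsub', heq]
      funext x
      have hx := Finset.ext_iff.mp this x
      simp only [mem_filter, mem_univ, true_and] at hx
      by_cases h : t x = true
      · rw [h, (hx.mp h).symm]
      · by_cases h' : t' x = true
        · exact absurd (hx.mpr h') h
        · rw [Bool.eq_false_iff.mpr h, Bool.eq_false_iff.mpr h']
    · intro B hB
      rw [Finset.mem_powersetCard] at hB
      obtain ⟨hBsub, hBcard⟩ := hB
      have hdisj : Disjoint B S := (Finset.subset_sdiff.mp hBsub).2
      refine ⟨fun x => decide (x ∈ B ∪ S), ?_, ?_⟩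
      · simp only [Finset.mem_filter, assignSet, mem_univ, true_and]
        have hfe : univ.filter (fun j => decide (j ∈ B ∪ S) = true) = B ∪ S := by
          ext x; simp
        constructor
        · rw [hfe, Finset.card_union_of_disjoint hdisj, hBcard]
          omega
        · intro x hx; simp [Finset.mem_union, hx]
      · have hfe : univ.filter (fun j => decide (j ∈ B ∪ S) = true) = B ∪ S := by
          ext x; simp
        rw [hfe, Finset.union_sdiff_right, Finset.sdiff_eq_self_of_disjoint hdisj]
  rw [key, card_powersetCard, card_sdiff_of_subset hsub, card_univ, Fintype.card_fin]

lemma count_zero (n n1 : ℕ) (S : Finset (Fin n)) (hS : n1 < S.card) :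
    ((assignSet n n1).filter (fun t => ∀ x ∈ S, t x = true)).card = 0 := by
  rw [Finset.card_eq_zero, Finset.eq_empty_iff_forall_notMem]
  intro t ht
  simp only [Finset.mem_filter, assignSet, mem_univ, true_and] at ht
  have hSsub : S ⊆ univ.filter (fun j => t j = true) := by
    intro x hx; simp [ht.2 x hx]
  have := Finset.card_le_card hSsub
  omega

lemma choose_id1 (n n1 : ℕ) (h1 : 1 ≤ n1) (hle : n1 ≤ n) :
    n * (n - 1).choose (n1 - 1) = n.choose n1 * n1 := by
  obtain ⟨a, rfl⟩ : ∃ a, n = a + 1 := ⟨n - 1, by omega⟩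
  obtain ⟨b, rfl⟩ : ∃ b, n1 = b + 1 := ⟨n1 - 1, by omega⟩
  simpa using Nat.add_one_mul_choose_eq a b

lemma choose_id2 (n n1 : ℕ) (h2 : 2 ≤ n1) (hle : n1 ≤ n) :
    n * (n - 1) * (n - 2).choose (n1 - 2) = n.choose n1 * (n1 * (n1 - 1)) := by
  have e1 : n - 1 - 1 = n - 2 := by omega
  have e2 : n1 - 1 - 1 = n1 - 2 := by omega
  have h1' := choose_id1 (n - 1) (n1 - 1) (by omega) (by omega)
  have h0 := choose_id1 n n1 (by omega) hle
  rw [e1, e2] at h1'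
  calc n * (n - 1) * (n - 2).choose (n1 - 2) = n * ((n - 1) * (n - 2).choose (n1 - 2)) := by ring
    _ = n * ((n - 1).choose (n1 - 1) * (n1 - 1)) := by rw [h1']
    _ = (n * (n - 1).choose (n1 - 1)) * (n1 - 1) := by ring
    _ = (n.choose n1 * n1) * (n1 - 1) := by rw [h0]
    _ = n.choose n1 * (n1 * (n1 - 1)) := by ring

lemma choose_id3 (n n1 : ℕ) (h3 : 3 ≤ n1) (hle : n1 ≤ n) :
    n * (n - 1) * (n - 2) * (n - 3).choose (n1 - 3) = n.choose n1 * (n1 * (n1 - 1) * (n1 - 2)) := by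
  have e1 : n - 1 - 1 = n - 2 := by omega
  have e1' : n - 1 - 2 = n - 3 := by omega
  have e2 : n1 - 1 - 1 = n1 - 2 := by omega
  have e2' : n1 - 1 - 2 = n1 - 3 := by omega
  have h2' := choose_id2 (n - 1) (n1 - 1) (by omega) (by omega)
  have h0 := choose_id1 n n1 (by omega) hle
  rw [e1, e1', e2, e2'] at h2'
  calc n * (n - 1) * (n - 2) * (n - 3).choose (n1 - 3)
      = n * ((n - 1) * (n - 2) * (n - 3).choose (n1 - 3)) := by ring
    _ = n * ((n - 1).choose (n1 - 1) * ((n1 - 1) * (n1 - 2))) := by rw [h2']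
    _ = (n * (n - 1).choose (n1 - 1)) * ((n1 - 1) * (n1 - 2)) := by ring
    _ = (n.choose n1 * n1) * ((n1 - 1) * (n1 - 2)) := by rw [h0]
    _ = n.choose n1 * (n1 * (n1 - 1) * (n1 - 2)) := by ring

lemma sum_ind (n n1 : ℕ) (S : Finset (Fin n)) :
    (∑ t ∈ assignSet n n1, if (∀ x ∈ S, t x = true) then (1 : ℝ) else 0)
      = (((assignSet n n1).filter (fun t => ∀ x ∈ S, t x = true)).card : ℝ) := by
  rw [Finset.sum_boole]

theorem stmt_6 (n n1 : ℕ) (hn : 3 ≤ n) (h1 : 1 ≤ n1) (hle : n1 ≤ n) (i j k : Fin n)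
    (hij : i ≠ j) (hik : i ≠ k) (hjk : j ≠ k) :
    cexp n n1
        (fun t => (Tv t i - (n1 : ℝ) / n) * (Tv t j - (n1 : ℝ) / n) * (Tv t k - (n1 : ℝ) / n))
      = 2 * (((n1 : ℝ) / n) * (1 - (n1 : ℝ) / n) * (1 - 2 * ((n1 : ℝ) / n)))
          / (((n : ℝ) - 1) * ((n : ℝ) - 2)) := by
  have hn0 : (n : ℝ) ≠ 0 := by
    have : (3:ℝ) ≤ n := by exact_mod_cast hn
    linarith
  have hn1r : (n : ℝ) - 1 ≠ 0 := by
    have : (3:ℝ) ≤ n := by exact_mod_cast hn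
    linarith
  have hn2r : (n : ℝ) - 2 ≠ 0 := by
    have : (3:ℝ) ≤ n := by exact_mod_cast hn
    linarith
  set N : ℕ := n.choose n1 with hN
  have hNpos : 0 < N := Nat.choose_pos hle
  have hNr : (N : ℝ) ≠ 0 := by positivity
  -- cardinality of assignSet
  have hcard : (assignSet n n1).card = N := by
    have h := count_filter n n1 ∅ (by simp)
    simpa using h
  -- sums of single indicators
  have hs1 : ∀ a : Fin n, (∑ t ∈ assignSet n n1, Tv t a) = (N : ℝ) * n1 / n := by
    intro a
    have hconv : (∑ t ∈ assignSet n n1, Tv t a)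
        = (∑ t ∈ assignSet n n1, if (∀ x ∈ ({a} : Finset (Fin n)), t x = true)
            then (1 : ℝ) else 0) := by
      apply Finset.sum_congr rfl
      intro t _
      simp [Tv]
    have hcnt := count_filter n n1 {a} (by simpa using h1)
    rw [hconv, sum_ind, hcnt]
    have hid := choose_id1 n n1 h1 hle
    rw [eq_div_iff hn0]
    have := congrArg (Nat.cast : ℕ → ℝ) hid
    push_cast at this
    simp only [Finset.card_singleton]
    linarith [this]
  -- sums of double indicators
  have hs2 : ∀ a b : Fin n, a ≠ b →
      (∑ t ∈ assignSet n n1, Tv t a * Tv t b)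
        = (N : ℝ) * (n1 * ((n1 : ℝ) - 1)) / ((n : ℝ) * ((n : ℝ) - 1)) := by
    intro a b hab
    have hcardS : ({a, b} : Finset (Fin n)).card = 2 := by
      rw [Finset.card_insert_of_notMem (by simpa using hab), Finset.card_singleton]
    have hconv : (∑ t ∈ assignSet n n1, Tv t a * Tv t b)
        = (∑ t ∈ assignSet n n1, if (∀ x ∈ ({a, b} : Finset (Fin n)), t x = true)
            then (1 : ℝ) else 0) := by
      apply Finset.sum_congr rfl
      intro t _
      simp only [Tv, Finset.mem_insert, Finset.mem_singleton]
      by_cases h1 : t a = true <;> by_cases h2 : t b = true <;>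
        simp [h1, h2]
    rw [hconv, sum_ind]
    by_cases h2 : 2 ≤ n1
    · have c1 : ((n - 1 : ℕ) : ℝ) = (n : ℝ) - 1 := by
        have h' : (1:ℕ) ≤ n := by omega
        push_cast [h']
        ring
      have c2 : ((n1 - 1 : ℕ) : ℝ) = (n1 : ℝ) - 1 := by
        have h' : (1:ℕ) ≤ n1 := by omega
        push_cast [h']
        ring
      have hcnt := count_filter n n1 {a, b} (by omega)
      rw [hcnt, hcardS]
      have hid := choose_id2 n n1 h2 hle
      rw [eq_div_iff (by positivity)]
      have := congrArg (Nat.cast : ℕ → ℝ) hid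
      push_cast [c1, c2] at this
      linarith [this]
    · have hn1eq : n1 = 1 := by omega
      subst hn1eq
      have hcnt := count_zero n 1 {a, b} (by omega)
      rw [hcnt]
      simp
  -- sum of triple indicators
  have hs3 : (∑ t ∈ assignSet n n1, Tv t i * Tv t j * Tv t k)
      = (N : ℝ) * (n1 * ((n1 : ℝ) - 1) * ((n1 : ℝ) - 2))
        / ((n : ℝ) * ((n : ℝ) - 1) * ((n : ℝ) - 2)) := by
    have hcardS : ({i, j, k} : Finset (Fin n)).card = 3 := by
      rw [Finset.card_insert_of_notMem (by simp [hij, hik]),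
        Finset.card_insert_of_notMem (by simpa using hjk), Finset.card_singleton]
    have hconv : (∑ t ∈ assignSet n n1, Tv t i * Tv t j * Tv t k)
        = (∑ t ∈ assignSet n n1, if (∀ x ∈ ({i, j, k} : Finset (Fin n)), t x = true)
            then (1 : ℝ) else 0) := by
      apply Finset.sum_congr rfl
      intro t _
      simp only [Tv, Finset.mem_insert, Finset.mem_singleton]
      by_cases e1 : t i = true <;> by_cases e2 : t j = true <;> by_cases e3 : t k = true <;>
        simp [e1, e2, e3]
    rw [hconv, sum_ind]
    by_cases h3 : 3 ≤ n1
    · have c1 : ((n - 1 : ℕ) : ℝ) = (n : ℝ) - 1 := by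
        have h' : (1:ℕ) ≤ n := by omega
        push_cast [h']
        ring
      have c1' : ((n - 2 : ℕ) : ℝ) = (n : ℝ) - 2 := by
        have h' : (2:ℕ) ≤ n := by omega
        push_cast [h']
        ring
      have c2 : ((n1 - 1 : ℕ) : ℝ) = (n1 : ℝ) - 1 := by
        have h' : (1:ℕ) ≤ n1 := by omega
        push_cast [h']
        ring
      have c2' : ((n1 - 2 : ℕ) : ℝ) = (n1 : ℝ) - 2 := by
        have h' : (2:ℕ) ≤ n1 := by omega
        push_cast [h']
        ring
      have hcnt := count_filter n n1 {i, j, k} (by omega)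
      rw [hcnt, hcardS]
      have hid := choose_id3 n n1 h3 hle
      rw [eq_div_iff (by positivity)]
      have := congrArg (Nat.cast : ℕ → ℝ) hid
      push_cast [c1, c1', c2, c2'] at this
      linarith [this]
    · have hcnt := count_zero n n1 {i, j, k} (by omega)
      rw [hcnt]
      clear hcnt hconv
      interval_cases n1 <;> norm_num
  -- expansion of the product
  set π : ℝ := (n1 : ℝ) / n with hπ
  have hnum : (∑ t ∈ assignSet n n1, (Tv t i - π) * (Tv t j - π) * (Tv t k - π))
      = (∑ t ∈ assignSet n n1, Tv t i * Tv t j * Tv t k)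
        - π * (∑ t ∈ assignSet n n1, Tv t i * Tv t j)
        - π * (∑ t ∈ assignSet n n1, Tv t i * Tv t k)
        - π * (∑ t ∈ assignSet n n1, Tv t j * Tv t k)
        + π ^ 2 * (∑ t ∈ assignSet n n1, Tv t i)
        + π ^ 2 * (∑ t ∈ assignSet n n1, Tv t j)
        + π ^ 2 * (∑ t ∈ assignSet n n1, Tv t k)
        - ((assignSet n n1).card : ℝ) * π ^ 3 := by
    have hpt : ∀ t ∈ assignSet n n1,
        (Tv t i - π) * (Tv t j - π) * (Tv t k - π)
          = Tv t i * Tv t j * Tv t k - π * (Tv t i * Tv t j) - π * (Tv t i * Tv t k)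
            - π * (Tv t j * Tv t k) + π ^ 2 * Tv t i + π ^ 2 * Tv t j + π ^ 2 * Tv t k
            - π ^ 3 := by
      intro t _
      ring
    rw [Finset.sum_congr rfl hpt]
    simp only [Finset.sum_sub_distrib, Finset.sum_add_distrib, Finset.sum_const,
      ← Finset.mul_sum, nsmul_eq_mul]
  rw [cexp, hnum, hs3, hs2 i j hij, hs2 i k hik, hs2 j k hjk, hs1 i, hs1 j, hs1 k, hcard, hπ]
  field_simp
  ring
end
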